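/- Let (𝒳, 𝒜) be a measurable space, let (X,Y) be a random pair with X taking values in 𝒳 and Y in ℝ, and let μ be the law of X. Let ℓ : ℝ × ℝ → [0,∞) be such that for every y ∈ ℝ the map u ↦ ℓ(y,u) is α-strongly convex for some α > 0 (i.e., u ↦ ℓ(y,u) − (α/2)u² is convex). Let T be a convex set of measurable functions t : 𝒳 → ℝ, each square-integrable with respect to μ and with finite risk R(t) = E[ℓ(Y, t(X))]. If t⋆ ∈ T minimizes R over T, then for every t ∈ T, ∫ (t(x) − t⋆(x))² dμ(x) ≤ (4/α)·(R(t) − R(t⋆)). -/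

import Mathlib

open MeasureTheory

/-- stability of supervised learning with an `α`-strongly convex loss.  The random
pair `(X, Y)` is encoded by its joint law `ν` on `𝒳 × ℝ`, and `μ = ν.map Prod.fst` is the law of
`X`.  If `t⋆ ∈ T` minimizes the risk `R(t) = E[ℓ(Y, t(X))]` over the convex class `T`, then the
`L²(μ)` distance from any `t ∈ T` to `t⋆` is controlled by the excess risk. -/
theorem stmt17 {𝒳 : Type*} [MeasurableSpace 𝒳]
    (ν : Measure (𝒳 × ℝ)) [IsProbabilityMeasure ν]
    (ℓ : ℝ → ℝ → ℝ) (hℓ_nonneg : ∀ y u, 0 ≤ ℓ y u)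
    (α : ℝ) (hα : 0 < α)
    (hconv : ∀ y : ℝ, ConvexOn ℝ Set.univ fun u => ℓ y u - α / 2 * u ^ 2)
    (T : Set (𝒳 → ℝ)) (hT : Convex ℝ T)
    (hmeas : ∀ t ∈ T, Measurable t)
    (hL2 : ∀ t ∈ T, MemLp t 2 (ν.map Prod.fst))
    (hint : ∀ t ∈ T, Integrable (fun p => ℓ p.2 (t p.1)) ν)
    (ts : 𝒳 → ℝ) (hts : ts ∈ T)
    (hmin : ∀ t ∈ T, ∫ p, ℓ p.2 (ts p.1) ∂ν ≤ ∫ p, ℓ p.2 (t p.1) ∂ν)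
    (t : 𝒳 → ℝ) (ht : t ∈ T) :
    ∫ x, (t x - ts x) ^ 2 ∂(ν.map Prod.fst) ≤
      (4 / α) * (∫ p, ℓ p.2 (t p.1) ∂ν - ∫ p, ℓ p.2 (ts p.1) ∂ν) := by
  set m : 𝒳 → ℝ := (1/2 : ℝ) • t + (1/2 : ℝ) • ts with hm_def
  have hm : m ∈ T := hT ht hts (by norm_num) (by norm_num) (by norm_num)
  -- pointwise strong convexity inequality
  have key : ∀ p : 𝒳 × ℝ, ℓ p.2 (m p.1) ≤
      (1/2) * ℓ p.2 (t p.1) + (1/2) * ℓ p.2 (ts p.1)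
        - (α/8) * (t p.1 - ts p.1) ^ 2 := by
    intro p
    have h := (hconv p.2).2 (Set.mem_univ (t p.1)) (Set.mem_univ (ts p.1))
      (by norm_num : (0:ℝ) ≤ 1/2) (by norm_num : (0:ℝ) ≤ 1/2) (by norm_num)
    simp only [smul_eq_mul] at h
    have hmp : m p.1 = (1/2) * t p.1 + (1/2) * ts p.1 := by
      simp [hm_def, smul_eq_mul]
    rw [hmp]
    nlinarith [h]
  -- integrability of the square term over ν
  have hsq_mu : Integrable (fun x => (t x - ts x) ^ 2) (ν.map Prod.fst) :=
    ((hL2 t ht).sub (hL2 ts hts)).integrable_sq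
  have hmeas_sq : Measurable fun x : 𝒳 => (t x - ts x) ^ 2 :=
    (((hmeas t ht).sub (hmeas ts hts)).pow_const 2)
  have hmap : ∫ x, (t x - ts x) ^ 2 ∂(ν.map Prod.fst)
      = ∫ p, (t p.1 - ts p.1) ^ 2 ∂ν := by
    rw [integral_map measurable_fst.aemeasurable hmeas_sq.aestronglyMeasurable]
  have hsq_nu : Integrable (fun p : 𝒳 × ℝ => (t p.1 - ts p.1) ^ 2) ν :=
    (integrable_map_measure hmeas_sq.aestronglyMeasurable
      measurable_fst.aemeasurable).mp hsq_mu
  -- integrate the pointwise bound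
  have hRHSint : Integrable (fun p : 𝒳 × ℝ =>
      (1/2) * ℓ p.2 (t p.1) + (1/2) * ℓ p.2 (ts p.1)
        - (α/8) * (t p.1 - ts p.1) ^ 2) ν :=
    (((hint t ht).const_mul _).add ((hint ts hts).const_mul _)).sub
      (hsq_nu.const_mul _)
  have hadd : Integrable (fun p : 𝒳 × ℝ =>
      (1/2) * ℓ p.2 (t p.1) + (1/2) * ℓ p.2 (ts p.1)) ν :=
    ((hint t ht).const_mul _).add ((hint ts hts).const_mul _)
  have h1 : Integrable (fun p : 𝒳 × ℝ => (1/2) * ℓ p.2 (t p.1)) ν :=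
    (hint t ht).const_mul _
  have h2 : Integrable (fun p : 𝒳 × ℝ => (1/2) * ℓ p.2 (ts p.1)) ν :=
    (hint ts hts).const_mul _
  have h3 : Integrable (fun p : 𝒳 × ℝ => (α/8) * (t p.1 - ts p.1) ^ 2) ν :=
    hsq_nu.const_mul _
  have hInt : ∫ p, ℓ p.2 (m p.1) ∂ν ≤
      (1/2) * ∫ p, ℓ p.2 (t p.1) ∂ν + (1/2) * ∫ p, ℓ p.2 (ts p.1) ∂ν
        - (α/8) * ∫ p, (t p.1 - ts p.1) ^ 2 ∂ν := by
    have := integral_mono (hint m hm) hRHSint key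
    rwa [integral_sub hadd h3, integral_add h1 h2,
      integral_const_mul, integral_const_mul, integral_const_mul] at this
  have hmin_m := hmin m hm
  rw [hmap]
  have h8 : (α/8) * ∫ p, (t p.1 - ts p.1) ^ 2 ∂ν ≤
      (1/2) * (∫ p, ℓ p.2 (t p.1) ∂ν - ∫ p, ℓ p.2 (ts p.1) ∂ν) := by
    linarith
  rw [div_mul_eq_mul_div, le_div_iff₀ hα]
  nlinarith [h8]
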